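/- arXiv:1105.0557 — 2 statements merged into one kernel-verified Lean document; each statement's English description precedes it below -/
import Mathlib

section
/- Let (X,d) be a separable metric space such that the action (Iso(X),X) is Cauchy-indivisible. If Y is a subset of X ∪ X_l with X ⊆ Y such that the map ω : E × Y → Y × X̂, ω(f,y) = (y, f y), is proper, then Y ⊆ X ∪ X_p. Hence X ∪ X_p is the maximal subset of X ∪ X_l containing X on which ω is proper. -/
open Filter Topology Set UniformSpace

noncomputable section

/-- The topology of pointwise convergence on the group of surjective isometries of `X`. -/
instance isoPointwiseTopology (X : Type*) [MetricSpace X] : TopologicalSpace (X ≃ᵢ X) :=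
  TopologicalSpace.induced (fun g => (g : X → X)) Pi.topologicalSpace

/-- A net `g` diverges (`g_i → ∞`), i.e. it has no convergent subnet; equivalently,
no cluster point. -/
def DivergentNet {G : Type*} [TopologicalSpace G] {ι : Type*} [Preorder ι]
    (g : ι → G) : Prop :=
  ∀ h : G, ¬ MapClusterPt h atTop g

/-- A sequence `g` diverges (`g_n → ∞`), i.e. it has no convergent subsequence. -/
def DivergentSeq {G : Type*} [TopologicalSpace G] (g : ℕ → G) : Prop :=
  ∀ φ : ℕ → ℕ, StrictMono φ → ∀ h : G, ¬ Tendsto (g ∘ φ) atTop (𝓝 h)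

/-- The natural evaluation action of `Iso(X)` on `X` is Cauchy-indivisible: whenever a
net `g` in `Iso(X)` has no convergent subnet and `(g_i x)` is a Cauchy net for some
`x`, then `(g_i y)` is a Cauchy net for every `y`. -/
def IsoCauchyIndivisible (X : Type*) [MetricSpace X] : Prop :=
  ∀ (ι : Type*) [Nonempty ι] [Preorder ι] [IsDirected ι (· ≤ ·)],
    ∀ g : ι → X ≃ᵢ X, DivergentNet g →
      (∃ x : X, Cauchy (map (fun i => g i x) atTop)) →
      ∀ y : X, Cauchy (map (fun i => g i y) atTop)

/-- Properness of the isometric evaluation action, expressed through emptiness of all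
limit sets `L(x)`: no net in `Iso(X)` without convergent subnet has `(g_i x)`
converging in `X`. -/
def IsoProperLimits (X : Type*) [MetricSpace X] : Prop :=
  ∀ (ι : Type*) [Nonempty ι] [Preorder ι] [IsDirected ι (· ≤ ·)],
    ∀ g : ι → X ≃ᵢ X, DivergentNet g →
      ∀ x y : X, ¬ Tendsto (fun i => g i x) atTop (𝓝 y)

/-- The canonical lift `ĝ` of an isometry of `X` to the completion `X̂`. -/
def hatIso {X : Type*} [MetricSpace X] (g : X ≃ᵢ X) : Completion X → Completion X :=
  Completion.map (g : X → X)

/-- The lifted group `{ĝ : g ∈ Iso(X)}` inside the selfmaps of `X̂`. -/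
def hatIsoSet (X : Type*) [MetricSpace X] : Set (Completion X → Completion X) :=
  Set.range (hatIso (X := X))

/-- The Ellis semigroup `E`: the closure of the lifted group `{ĝ}` in the topology of
pointwise convergence on selfmaps of `X̂`. -/
def Ellis (X : Type*) [MetricSpace X] : Set (Completion X → Completion X) :=
  closure (hatIsoSet X)

/-- The set `H` of pointwise limits on `X̂` of divergent sequences of lifted isometries. -/
def Hset (X : Type*) [MetricSpace X] : Set (Completion X → Completion X) :=
  { h | Continuous h ∧ ∃ g : ℕ → X ≃ᵢ X, DivergentSeq g ∧
      Tendsto (fun n => hatIso (g n)) atTop (𝓝 h) }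

/-- The set `X_l ⊆ X̂` of limit points of the action `(Iso(X), X)` in the completion. -/
def Xl (X : Type*) [MetricSpace X] : Set (Completion X) :=
  { y | ∃ (g : ℕ → X ≃ᵢ X) (x : X), DivergentSeq g ∧
      CauchySeq (fun n => g n x) ∧
      Tendsto (fun n => ((g n x : X) : Completion X)) atTop (𝓝 y) }

/-- The set `X_p ⊆ X̂` of special limit points of the action `(Iso(X), X)`. -/
def Xp (X : Type*) [MetricSpace X] : Set (Completion X) :=
  { y | ∃ (g : ℕ → X ≃ᵢ X) (x : X), DivergentSeq g ∧
      CauchySeq (fun n => g n x) ∧ CauchySeq (fun n => (g n).symm x) ∧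
      Tendsto (fun n => ((g n x : X) : Completion X)) atTop (𝓝 y) }

/-- `X ∪ X_l`, with `X` identified with its image in the completion `X̂`. -/
def XcupXl (X : Type*) [MetricSpace X] : Set (Completion X) :=
  Set.range ((↑) : X → Completion X) ∪ Xl X

/-- `X ∪ X_p`, with `X` identified with its image in the completion `X̂`. -/
def XcupXp (X : Type*) [MetricSpace X] : Set (Completion X) :=
  Set.range ((↑) : X → Completion X) ∪ Xp X

/-- The Ellis semigroup is a group: every element has a two-sided inverse in `E`
(under composition). -/
def EllisIsGroup (X : Type*) [MetricSpace X] : Prop :=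
  ∀ f ∈ Ellis X, ∃ g ∈ Ellis X, f ∘ g = id ∧ g ∘ f = id


section Aux

open TopologicalSpace

variable {X : Type*} [MetricSpace X]

lemma hatIso_coe (g : X ≃ᵢ X) (x : X) :
    hatIso g ((x : X) : Completion X) = ((g x : X) : Completion X) :=
  Completion.map_coe g.isometry.uniformContinuous x

lemma isometry_hatIso (g : X ≃ᵢ X) : Isometry (hatIso g) :=
  g.isometry.completion_map

lemma hatIso_mem_ellis (g : X ≃ᵢ X) : hatIso g ∈ Ellis X :=
  subset_closure (Set.mem_range_self g)

lemma isClosed_ellis : IsClosed (Ellis X) := isClosed_closure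

lemma ellis_isometry {f : Completion X → Completion X} (hf : f ∈ Ellis X) : Isometry f := by
  have hclosed : IsClosed {f : Completion X → Completion X | ∀ a b, dist (f a) (f b) = dist a b} := by
    have heq : {f : Completion X → Completion X | ∀ a b, dist (f a) (f b) = dist a b} =
        ⋂ (a) (b), {f : Completion X → Completion X | dist (f a) (f b) = dist a b} := by
      ext f; simp [Set.mem_iInter]
    rw [heq]
    exact isClosed_iInter fun a => isClosed_iInter fun b =>
      isClosed_eq ((continuous_apply a).dist (continuous_apply b)) continuous_const
  have hsub : hatIsoSet X ⊆ {f : Completion X → Completion X | ∀ a b, dist (f a) (f b) = dist a b} := by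
    rintro _ ⟨g, rfl⟩
    exact fun a b => (isometry_hatIso g).dist_eq a b
  exact Isometry.of_dist_eq fun a b => closure_minimal hsub hclosed hf a b

lemma tendsto_iso_iff {α : Type*} {l : Filter α} {g : α → X ≃ᵢ X} {h : X ≃ᵢ X} :
    Tendsto g l (𝓝 h) ↔ ∀ x : X, Tendsto (fun a => g a x) l (𝓝 (h x)) := by
  have hn : 𝓝 h = comap (fun g : X ≃ᵢ X => (g : X → X)) (𝓝 (h : X → X)) := nhds_induced _ h
  rw [hn, tendsto_comap_iff, tendsto_pi_nhds]
  exact Iff.rfl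

lemma continuous_iso_apply (x : X) : Continuous (fun g : X ≃ᵢ X => g x) :=
  (continuous_apply x).comp (continuous_induced_dom (α := X ≃ᵢ X))

end Aux
section Aux2

open TopologicalSpace

variable {X : Type*} [MetricSpace X]

lemma exists_subseq_tendsto_of_mapClusterPt [SeparableSpace X]
    {g : ℕ → X ≃ᵢ X} {h : X ≃ᵢ X} (hc : MapClusterPt h atTop g) :
    ∃ φ : ℕ → ℕ, StrictMono φ ∧ Tendsto (g ∘ φ) atTop (𝓝 h) := by
  rcases isEmpty_or_nonempty X with hX | hX
  · refine ⟨id, strictMono_id, ?_⟩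
    rw [tendsto_iso_iff]
    exact fun x => hX.elim x
  · set s : ℕ → X := denseSeq X with hsdef
    have hds : DenseRange s := denseRange_denseSeq X
    have hfreq : ∀ N m : ℕ, ∃ n, N ≤ n ∧ ∀ k ≤ m, dist (g n (s k)) (h (s k)) < 1/(m+1) := by
      intro N m
      have hpos : (0:ℝ) < 1/(m+1) := by positivity
      have hU : {g' : X ≃ᵢ X | ∀ k ≤ m, dist (g' (s k)) (h (s k)) < 1/(m+1)} ∈ 𝓝 h := by
        have heq : {g' : X ≃ᵢ X | ∀ k ≤ m, dist (g' (s k)) (h (s k)) < 1/(m+1)} =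
            ⋂ k ∈ Finset.range (m+1), {g' : X ≃ᵢ X | dist (g' (s k)) (h (s k)) < 1/(m+1)} := by
          ext g'
          simp only [Set.mem_setOf_eq, Set.mem_iInter, Finset.mem_range, Nat.lt_succ_iff]
        rw [heq]
        refine (isOpen_biInter_finset fun k _ => ?_).mem_nhds ?_
        · exact isOpen_lt ((continuous_iso_apply (s k)).dist continuous_const) continuous_const
        · simp only [Set.mem_iInter, Set.mem_setOf_eq, dist_self]
          exact fun k _ => hpos
      have hfr := (mapClusterPt_iff_frequently.mp hc) _ hU
      rw [frequently_atTop] at hfr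
      obtain ⟨n, hn, hn'⟩ := hfr N
      exact ⟨n, hn, hn'⟩
    choose v hv1 hv2 using hfreq
    set φ : ℕ → ℕ := fun n => Nat.rec (v 0 0) (fun m ih => v (ih + 1) (m + 1)) n with hφdef
    have hφs : ∀ m, φ (m + 1) = v (φ m + 1) (m + 1) := fun m => rfl
    have hφmono : StrictMono φ := strictMono_nat_of_lt_succ (fun n => by
      have h1 := hv1 (φ n + 1) (n + 1)
      rw [hφs n]; omega)
    have hφprop : ∀ n, ∀ k ≤ n, dist (g (φ n) (s k)) (h (s k)) < 1/(n+1) := by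
      intro n
      cases n with
      | zero => exact hv2 0 0
      | succ m =>
        rw [hφs m]
        exact hv2 (φ m + 1) (m + 1)
    refine ⟨φ, hφmono, ?_⟩
    rw [tendsto_iso_iff]
    intro x
    rw [Metric.tendsto_atTop]
    intro ε hε
    obtain ⟨k, hk⟩ := Metric.denseRange_iff.mp hds x (ε/3) (by positivity)
    obtain ⟨M, hM⟩ := exists_nat_one_div_lt (show (0:ℝ) < ε/3 by positivity)
    refine ⟨max k M, fun n hn => ?_⟩
    have hkn : k ≤ n := le_trans (le_max_left _ _) hn
    have hMn : M ≤ n := le_trans (le_max_right _ _) hn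
    have h1 : dist ((g ∘ φ) n x) (h x) ≤
        dist (g (φ n) x) (g (φ n) (s k)) + dist (g (φ n) (s k)) (h (s k)) + dist (h (s k)) (h x) :=
      dist_triangle4 _ _ _ _
    rw [(g (φ n)).dist_eq, h.dist_eq] at h1
    have h2 : dist (g (φ n) (s k)) (h (s k)) < 1/(n+1) := hφprop n k hkn
    have h3 : (1:ℝ)/(n+1) ≤ 1/(M+1) := by
      apply one_div_le_one_div_of_le (by positivity)
      have : (M:ℝ) ≤ n := by exact_mod_cast hMn
      linarith
    have h4 : dist (s k) x < ε/3 := by rw [dist_comm]; exact hk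
    have h5 : dist x (s k) < ε/3 := hk
    linarith

lemma divergentNet_of_divergentSeq [SeparableSpace X] {g : ℕ → X ≃ᵢ X}
    (hg : DivergentSeq g) : DivergentNet g := by
  intro h hc
  obtain ⟨φ, hφ, hconv⟩ := exists_subseq_tendsto_of_mapClusterPt hc
  exact hg φ hφ h hconv

lemma divergentSeq_symm {g : ℕ → X ≃ᵢ X} (hg : DivergentSeq g) :
    DivergentSeq (fun n => (g n).symm) := by
  intro φ hφ u hu
  refine hg φ hφ u.symm ?_
  rw [tendsto_iso_iff] at hu ⊢
  intro x
  rw [tendsto_iff_dist_tendsto_zero]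
  have h1 : Tendsto (fun n => dist x ((g (φ n)).symm (u.symm x))) atTop (𝓝 (dist x (u (u.symm x)))) :=
    tendsto_const_nhds.dist (hu (u.symm x))
  simp only [IsometryEquiv.apply_symm_apply, dist_self] at h1
  refine h1.congr fun n => ?_
  calc dist x ((g (φ n)).symm (u.symm x))
      = dist ((g (φ n)).symm (g (φ n) x)) ((g (φ n)).symm (u.symm x)) := by
        rw [IsometryEquiv.symm_apply_apply]
    _ = dist ((g ∘ φ) n x) (u.symm x) := (g (φ n)).symm.dist_eq _ _

lemma divergentSeq_comp {g : ℕ → X ≃ᵢ X} (hg : DivergentSeq g) {φ : ℕ → ℕ} (hφ : StrictMono φ) :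
    DivergentSeq (g ∘ φ) := fun ψ hψ h ht => hg (φ ∘ ψ) (hφ.comp hψ) h ht

lemma cauchySeq_coe_iff {u : ℕ → X} :
    CauchySeq (fun n => ((u n : X) : Completion X)) ↔ CauchySeq u := by
  have h2 : atTop.map (fun n => ((u n : X) : Completion X))
      = Filter.map ((↑) : X → Completion X) (atTop.map u) := by
    rw [Filter.map_map]; rfl
  show Cauchy _ ↔ Cauchy _
  rw [h2]
  exact (Completion.isUniformInducing_coe X).cauchy_map_iff

end Aux2
section Aux3

open TopologicalSpace

universe uu vv

lemma map_ulift_down_atTop : Filter.map (ULift.down : ULift.{vv} ℕ → ℕ) atTop = atTop := by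
  have hup : Tendsto (ULift.up.{vv} : ℕ → ULift.{vv} ℕ) atTop atTop :=
    tendsto_atTop_atTop_of_monotone (fun a b h => h) (fun b => ⟨b.down, le_rfl⟩)
  have hdown : Tendsto (ULift.down : ULift.{vv} ℕ → ℕ) atTop atTop :=
    tendsto_atTop_atTop_of_monotone (fun a b h => h) (fun b => ⟨⟨b⟩, le_rfl⟩)
  refine le_antisymm hdown ?_
  have h1 : Filter.map (ULift.down : ULift.{vv} ℕ → ℕ) (Filter.map ULift.up atTop) ≤
      Filter.map (ULift.down : ULift.{vv} ℕ → ℕ) atTop := Filter.map_mono hup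
  rwa [Filter.map_map, show ((ULift.down : ULift.{vv} ℕ → ℕ) ∘ ULift.up) = id from rfl,
    Filter.map_id] at h1

variable {X : Type uu} [MetricSpace X]

lemma ci_seq (hCI : IsoCauchyIndivisible.{uu, vv} X) {g : ℕ → X ≃ᵢ X}
    (hdiv : DivergentNet g) {x : X} (hx : CauchySeq fun n => g n x) (y : X) :
    CauchySeq fun n => g n y := by
  have hrw : ∀ {α : Type uu} (u : ℕ → α),
      Filter.map (fun i : ULift.{vv} ℕ => u i.down) atTop = Filter.map u atTop := by
    intro α u
    rw [← map_ulift_down_atTop.{vv}, Filter.map_map]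
    rfl
  have key := hCI (ULift.{vv} ℕ) (fun i => g i.down) ?_ ⟨x, ?_⟩ y
  · show Cauchy (Filter.map (fun n => g n y) atTop)
    rw [← hrw (fun n => g n y)]
    exact key
  · intro h hc
    refine hdiv h ?_
    show ClusterPt h (Filter.map g atTop)
    have : ClusterPt h (Filter.map (fun i : ULift.{vv} ℕ => g i.down) atTop) := hc
    rwa [hrw g] at this
  · show Cauchy (Filter.map (fun i : ULift.{vv} ℕ => g i.down x) atTop)
    rw [hrw (fun n => g n x)]
    exact hx

lemma cauchySeq_all_of_dense {F : ℕ → Completion X → Completion X}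
    (hFiso : ∀ n, Isometry (F n)) {D : Set (Completion X)} (hD : Dense D)
    (h : ∀ w ∈ D, CauchySeq (fun n => F n w)) (w : Completion X) :
    CauchySeq (fun n => F n w) := by
  rw [Metric.cauchySeq_iff]
  intro ε hε
  obtain ⟨d, hd2, hd1⟩ := Metric.dense_iff.mp hD w (ε/3) (by positivity)
  rw [Metric.mem_ball, dist_comm] at hd2
  obtain ⟨N, hN⟩ := Metric.cauchySeq_iff.mp (h d hd1) (ε/3) (by positivity)
  refine ⟨N, fun m hm n hn => ?_⟩
  have h1 : dist (F m w) (F n w) ≤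
      dist (F m w) (F m d) + dist (F m d) (F n d) + dist (F n d) (F n w) := dist_triangle4 _ _ _ _
  rw [(hFiso m).dist_eq, (hFiso n).dist_eq] at h1
  have h2 := hN m hm n hn
  have h3 : dist d w = dist w d := dist_comm _ _
  linarith

lemma tendsto_all_of_dense {F : ℕ → Completion X → Completion X} {G : Completion X → Completion X}
    (hFiso : ∀ n, Isometry (F n)) (hGiso : Isometry G) {D : Set (Completion X)} (hD : Dense D)
    (h : ∀ w ∈ D, Tendsto (fun n => F n w) atTop (𝓝 (G w))) (w : Completion X) :
    Tendsto (fun n => F n w) atTop (𝓝 (G w)) := by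
  rw [Metric.tendsto_atTop]
  intro ε hε
  obtain ⟨d, hd2, hd1⟩ := Metric.dense_iff.mp hD w (ε/3) (by positivity)
  rw [Metric.mem_ball, dist_comm] at hd2
  obtain ⟨N, hN⟩ := Metric.tendsto_atTop.mp (h d hd1) (ε/3) (by positivity)
  refine ⟨N, fun n hn => ?_⟩
  have h1 : dist (F n w) (G w) ≤
      dist (F n w) (F n d) + dist (F n d) (G d) + dist (G d) (G w) := dist_triangle4 _ _ _ _
  rw [(hFiso n).dist_eq, hGiso.dist_eq] at h1
  have h2 := hN n hn
  have h3 : dist d w = dist w d := dist_comm _ _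
  linarith

lemma isometry_of_tendsto {F : ℕ → Completion X → Completion X} {G : Completion X → Completion X}
    (hFiso : ∀ n, Isometry (F n)) (h : ∀ w, Tendsto (fun n => F n w) atTop (𝓝 (G w))) :
    Isometry G := by
  refine Isometry.of_dist_eq fun a b => ?_
  have h1 : Tendsto (fun n => dist (F n a) (F n b)) atTop (𝓝 (dist (G a) (G b))) :=
    (h a).dist (h b)
  have h2 : (fun n => dist (F n a) (F n b)) = fun _ => dist a b :=
    funext fun n => (hFiso n).dist_eq a b
  rw [h2] at h1
  exact tendsto_nhds_unique h1 tendsto_const_nhds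

lemma mem_ellis_of_tendsto {F : ℕ → Completion X → Completion X} {G : Completion X → Completion X}
    (hF : ∀ n, F n ∈ Ellis X) (h : ∀ w, Tendsto (fun n => F n w) atTop (𝓝 (G w))) :
    G ∈ Ellis X := by
  have ht : Tendsto F atTop (𝓝 G) := tendsto_pi_nhds.mpr h
  have hm := mem_closure_of_tendsto ht (Filter.Eventually.of_forall hF)
  rwa [isClosed_ellis.closure_eq] at hm

lemma mem_ellis_of_tendsto_hat {F : ℕ → Completion X → Completion X} {G : Completion X → Completion X}
    (hF : ∀ n, F n ∈ hatIsoSet X) (h : ∀ w, Tendsto (fun n => F n w) atTop (𝓝 (G w))) :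
    G ∈ Ellis X :=
  mem_closure_of_tendsto (tendsto_pi_nhds.mpr h) (Filter.Eventually.of_forall hF)

lemma isEmpty_completion (h : IsEmpty X) : IsEmpty (Completion X) := by
  constructor
  intro w
  have hdr : Dense (Set.range ((↑) : X → Completion X)) := Completion.denseRange_coe
  rw [Set.range_eq_empty, dense_iff_closure_eq, closure_empty] at hdr
  have : w ∈ (∅ : Set (Completion X)) := hdr.symm ▸ Set.mem_univ w
  exact Set.notMem_empty w this

end Aux3
section Aux4

open TopologicalSpace

variable {X : Type*} [MetricSpace X]

lemma main_coe [SeparableSpace X] (hCI : IsoCauchyIndivisible X)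
    {f : ℕ → Completion X → Completion X} (hf : ∀ n, f n ∈ Ellis X) (x₀ : X) {z : Completion X}
    (hz : Tendsto (fun n => f n ((x₀ : X) : Completion X)) atTop (𝓝 z)) :
    ∃ φ : ℕ → ℕ, StrictMono φ ∧ ∃ G ∈ Ellis X,
      ∀ w, Tendsto (fun n => f (φ n) w) atTop (𝓝 (G w)) := by
  have hXne : Nonempty X := ⟨x₀⟩
  set s : ℕ → X := denseSeq X with hsdef
  have hds : DenseRange s := denseRange_denseSeq X
  set sc : ℕ → Completion X := fun k => ((s k : X) : Completion X) with hscdef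
  have hdsc : DenseRange sc := Completion.denseRange_coe.comp hds (Completion.continuous_coe X)
  have happ : ∀ n, ∃ gI : X ≃ᵢ X,
      dist (hatIso gI ((x₀ : X) : Completion X)) (f n ((x₀ : X) : Completion X)) < 1/(n+1) ∧
      ∀ k < n, dist (hatIso gI (sc k)) (f n (sc k)) < 1/(n+1) := by
    intro n
    have hpos : (0:ℝ) < 1/(n+1) := by positivity
    set U : Set (Completion X → Completion X) :=
      {f' | dist (f' ((x₀ : X) : Completion X)) (f n ((x₀ : X) : Completion X)) < 1/(n+1)} ∩
        ⋂ k ∈ Finset.range n, {f' | dist (f' (sc k)) (f n (sc k)) < 1/(n+1)} with hUdef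
    have hUopen : IsOpen U := by
      refine IsOpen.inter ?_ (isOpen_biInter_finset fun k _ => ?_)
      · exact isOpen_lt ((continuous_apply _).dist continuous_const) continuous_const
      · exact isOpen_lt ((continuous_apply _).dist continuous_const) continuous_const
    have hUmem : f n ∈ U := by
      constructor
      · simp only [Set.mem_setOf_eq, dist_self]; exact hpos
      · simp only [Set.mem_iInter, Set.mem_setOf_eq, dist_self]
        exact fun k _ => hpos
    obtain ⟨f', hf'⟩ := _root_.mem_closure_iff.mp (hf n) U hUopen hUmem
    obtain ⟨gI, rfl⟩ := hf'.2
    refine ⟨gI, hf'.1.1, fun k hk => ?_⟩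
    have h2 := Set.mem_iInter₂.mp hf'.1.2 k (Finset.mem_range.mpr hk)
    exact h2
  choose g hg0 hg1 using happ
  have hgx0 : Tendsto (fun n => ((g n x₀ : X) : Completion X)) atTop (𝓝 z) := by
    refine hz.congr_dist ?_
    refine squeeze_zero' (Filter.Eventually.of_forall fun n => dist_nonneg)
      (Filter.Eventually.of_forall fun n => ?_) tendsto_one_div_add_atTop_nhds_zero_nat
    rw [← hatIso_coe, dist_comm]
    exact (hg0 n).le
  have hgcauchy : CauchySeq (fun n => g n x₀) := cauchySeq_coe_iff.mp hgx0.cauchySeq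
  by_cases hdiv : DivergentNet g
  · have horb : ∀ y : X, CauchySeq fun n => g n y := fun y => ci_seq hCI hdiv hgcauchy y
    have hallw : ∀ w, CauchySeq (fun n => hatIso (g n) w) := by
      refine fun w => cauchySeq_all_of_dense (fun n => isometry_hatIso (g n))
        (Completion.denseRange_coe (α := X)) ?_ w
      rintro _ ⟨x, rfl⟩
      simp only [hatIso_coe]
      exact cauchySeq_coe_iff.mpr (horb x)
    choose G hG using fun w => cauchySeq_tendsto_of_complete (hallw w)
    have hGiso : Isometry G := isometry_of_tendsto (fun n => isometry_hatIso (g n)) hG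
    have hGellis : G ∈ Ellis X := mem_ellis_of_tendsto_hat (fun n => Set.mem_range_self _) hG
    have hfk : ∀ w ∈ Set.range sc, Tendsto (fun n => f n w) atTop (𝓝 (G w)) := by
      rintro _ ⟨k, rfl⟩
      refine (hG (sc k)).congr_dist ?_
      refine squeeze_zero' (Filter.Eventually.of_forall fun n => dist_nonneg) ?_
        tendsto_one_div_add_atTop_nhds_zero_nat
      filter_upwards [eventually_gt_atTop k] with n hn
      exact (hg1 n k hn).le
    exact ⟨id, strictMono_id, G, hGellis,
      tendsto_all_of_dense (fun n => ellis_isometry (hf n)) hGiso hdsc hfk⟩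
  · rw [DivergentNet] at hdiv
    push_neg at hdiv
    obtain ⟨h, hcp⟩ := hdiv
    obtain ⟨φ, hφ, hconv⟩ := exists_subseq_tendsto_of_mapClusterPt hcp
    rw [tendsto_iso_iff] at hconv
    have hhatconv : ∀ w, Tendsto (fun n => hatIso (g (φ n)) w) atTop (𝓝 (hatIso h w)) := by
      refine fun w => tendsto_all_of_dense (fun n => isometry_hatIso _) (isometry_hatIso h)
        (Completion.denseRange_coe (α := X)) ?_ w
      rintro _ ⟨x, rfl⟩
      simp only [hatIso_coe]
      exact ((Completion.continuous_coe X).tendsto (h x)).comp (hconv x)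
    have hfφ : ∀ w ∈ Set.range sc, Tendsto (fun n => f (φ n) w) atTop (𝓝 (hatIso h w)) := by
      rintro _ ⟨k, rfl⟩
      refine (hhatconv (sc k)).congr_dist ?_
      refine squeeze_zero' (Filter.Eventually.of_forall fun n => dist_nonneg) ?_
        tendsto_one_div_add_atTop_nhds_zero_nat
      filter_upwards [eventually_gt_atTop k] with n hn
      have hkφ : k < φ n := lt_of_lt_of_le hn hφ.le_apply
      have hb : dist (hatIso (g (φ n)) (sc k)) (f (φ n) (sc k)) < 1/(φ n + 1) := hg1 (φ n) k hkφ
      have hle : (1:ℝ)/(φ n + 1) ≤ 1/(n+1) := by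
        apply one_div_le_one_div_of_le (by positivity)
        have : (n:ℝ) ≤ (φ n : ℝ) := by exact_mod_cast hφ.le_apply
        linarith
      linarith
    exact ⟨φ, hφ, hatIso h, hatIso_mem_ellis h,
      tendsto_all_of_dense (fun n => ellis_isometry (hf (φ n))) (isometry_hatIso h) hdsc hfφ⟩

end Aux4
section Aux5

open TopologicalSpace

variable {X : Type*} [MetricSpace X]

lemma xp_reduction [SeparableSpace X] (hCI : IsoCauchyIndivisible X) {y₀ : Completion X}
    (hy : y₀ ∈ Xp X) :
    ∃ H : Completion X → Completion X, Function.Surjective H ∧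
      (∀ f ∈ Ellis X, f ∘ H ∈ Ellis X) ∧ ∃ x : X, H ((x : X) : Completion X) = y₀ := by
  obtain ⟨g, x, hdivs, hc1, hc2, hlim⟩ := hy
  have hdnet : DivergentNet g := divergentNet_of_divergentSeq hdivs
  have hdnet' : DivergentNet (fun m => (g m).symm) :=
    divergentNet_of_divergentSeq (divergentSeq_symm hdivs)
  have horb : ∀ y : X, CauchySeq fun m => g m y := fun y => ci_seq hCI hdnet hc1 y
  have horb' : ∀ y : X, CauchySeq fun m => (g m).symm y := fun y => ci_seq hCI hdnet' hc2 y
  have hallw : ∀ w, CauchySeq fun m => hatIso (g m) w := fun w =>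
    cauchySeq_all_of_dense (fun m => isometry_hatIso _) (Completion.denseRange_coe (α := X))
      (by rintro _ ⟨x', rfl⟩
          simp only [hatIso_coe]
          exact cauchySeq_coe_iff.mpr (horb x')) w
  choose H hH using fun w => cauchySeq_tendsto_of_complete (hallw w)
  have hHiso : Isometry H := isometry_of_tendsto (fun m => isometry_hatIso _) hH
  have hHx : H ((x : X) : Completion X) = y₀ := by
    have h1 := hH ((x : X) : Completion X)
    simp only [hatIso_coe] at h1
    exact tendsto_nhds_unique h1 hlim
  have hrange : ∀ x' : X, ((x' : X) : Completion X) ∈ Set.range H := by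
    intro x'
    obtain ⟨u, hu⟩ := cauchySeq_tendsto_of_complete (cauchySeq_coe_iff.mpr (horb' x'))
    refine ⟨u, ?_⟩
    have hconst : Tendsto (fun m => hatIso (g m) ((((g m).symm x' : X)) : Completion X)) atTop
        (𝓝 ((x' : X) : Completion X)) := by
      have heq : (fun m => hatIso (g m) ((((g m).symm x' : X)) : Completion X))
          = fun _ => ((x' : X) : Completion X) := by
        funext m
        rw [hatIso_coe, IsometryEquiv.apply_symm_apply]
      rw [heq]
      exact tendsto_const_nhds
    have h2 : Tendsto (fun m => hatIso (g m) u) atTop (𝓝 ((x' : X) : Completion X)) := by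
      refine hconst.congr_dist ?_
      have hd : ∀ m, dist (hatIso (g m) ((((g m).symm x' : X)) : Completion X)) (hatIso (g m) u)
          = dist ((((g m).symm x' : X)) : Completion X) u :=
        fun m => (isometry_hatIso (g m)).dist_eq _ _
      simp only [hd]
      exact tendsto_iff_dist_tendsto_zero.mp hu
    exact tendsto_nhds_unique (hH u) h2
  have hsurj : Function.Surjective H := by
    have hcl : IsClosed (Set.range H) := hHiso.isClosedEmbedding.isClosed_range
    have hsub : Set.range ((↑) : X → Completion X) ⊆ Set.range H := by
      rintro _ ⟨x', rfl⟩; exact hrange x'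
    have hdr : Dense (Set.range ((↑) : X → Completion X)) := Completion.denseRange_coe
    intro w
    have huniv : closure (Set.range ((↑) : X → Completion X)) ⊆ Set.range H :=
      closure_minimal hsub hcl
    rw [hdr.closure_eq] at huniv
    exact huniv (Set.mem_univ w)
  have hPhi : ∀ f ∈ Ellis X, f ∘ H ∈ Ellis X := by
    have hcont : Continuous (fun f : Completion X → Completion X => f ∘ H) :=
      continuous_pi fun w => continuous_apply (H w)
    have hcomp : ∀ (gI : X ≃ᵢ X) (m : ℕ),
        hatIso gI ∘ hatIso (g m) = hatIso ((g m).trans gI) := by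
      intro gI m
      unfold hatIso
      rw [Completion.map_comp gI.isometry.uniformContinuous (g m).isometry.uniformContinuous]
      have hce : ⇑((g m).trans gI) = ⇑gI ∘ ⇑(g m) :=
        funext fun a => IsometryEquiv.trans_apply (g m) gI a
      rw [hce]
    have hbase : ∀ gI : X ≃ᵢ X, hatIso gI ∘ H ∈ Ellis X := by
      intro gI
      refine mem_ellis_of_tendsto_hat (F := fun m => hatIso ((g m).trans gI))
        (fun m => Set.mem_range_self _) ?_
      intro w
      have h1 : Tendsto (fun m => hatIso gI (hatIso (g m) w)) atTop (𝓝 (hatIso gI (H w))) :=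
        ((isometry_hatIso gI).continuous.tendsto (H w)).comp (hH w)
      refine h1.congr fun m => ?_
      exact congrFun (hcomp gI m) w
    intro f hfE
    have himg := image_closure_subset_closure_image
      (f := fun f : Completion X → Completion X => f ∘ H) (s := hatIsoSet X) hcont
    have hf2 : (fun f : Completion X → Completion X => f ∘ H) '' (hatIsoSet X) ⊆ Ellis X := by
      rintro _ ⟨_, ⟨gI, rfl⟩, rfl⟩
      exact hbase gI
    have hmem : (fun f : Completion X → Completion X => f ∘ H) f ∈
        closure ((fun f : Completion X → Completion X => f ∘ H) '' (hatIsoSet X)) :=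
      himg (Set.mem_image_of_mem _ hfE)
    exact (isClosed_ellis.closure_subset_iff.mpr hf2) hmem
  exact ⟨H, hsurj, hPhi, x, hHx⟩

lemma main_lemma [SeparableSpace X] (hCI : IsoCauchyIndivisible X)
    {f : ℕ → Completion X → Completion X} (hf : ∀ n, f n ∈ Ellis X) {y₀ : Completion X}
    (hy : y₀ ∈ XcupXp X) {z : Completion X}
    (hz : Tendsto (fun n => f n y₀) atTop (𝓝 z)) :
    ∃ φ : ℕ → ℕ, StrictMono φ ∧ ∃ G ∈ Ellis X,
      ∀ w, Tendsto (fun n => f (φ n) w) atTop (𝓝 (G w)) := by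
  rcases hy with ⟨x₀, rfl⟩ | hyp
  · exact main_coe hCI hf x₀ hz
  · obtain ⟨H, hsurj, hPhi, x₀, hHx⟩ := xp_reduction hCI hyp
    have hz' : Tendsto (fun n => (f n ∘ H) ((x₀ : X) : Completion X)) atTop (𝓝 z) := by
      refine hz.congr fun n => ?_
      rw [Function.comp_apply, hHx]
    obtain ⟨φ, hφ, G', hG', hconv⟩ :=
      main_coe hCI (f := fun n => f n ∘ H) (fun n => hPhi _ (hf n)) x₀ hz'
    set G : Completion X → Completion X := fun w => G' (Function.surjInv hsurj w) with hGdef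
    have hconv' : ∀ w, Tendsto (fun n => f (φ n) w) atTop (𝓝 (G w)) := by
      intro w
      have h1 := hconv (Function.surjInv hsurj w)
      have h2 : ∀ n, (f (φ n) ∘ H) (Function.surjInv hsurj w) = f (φ n) w := by
        intro n
        rw [Function.comp_apply, Function.surjInv_eq hsurj w]
      exact h1.congr h2
    exact ⟨φ, hφ, G, mem_ellis_of_tendsto (fun n => hf (φ n)) hconv', hconv'⟩

end Aux5
section Aux6

open TopologicalSpace

variable {X : Type*} [MetricSpace X]

lemma continuous_ev2 {Y : Set (Completion X)} :
    Continuous (fun p : ↥(Ellis X) × ↥Y =>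
      (p.1 : Completion X → Completion X) ((p.2 : Completion X))) := by
  rw [continuous_iff_continuousAt]
  intro p
  show Tendsto _ (𝓝 p) _
  rw [tendsto_iff_dist_tendsto_zero]
  have hb : ∀ q : ↥(Ellis X) × ↥Y,
      dist ((q.1 : Completion X → Completion X) ((q.2 : Completion X)))
        ((p.1 : Completion X → Completion X) ((p.2 : Completion X))) ≤
      dist ((q.2 : Completion X)) ((p.2 : Completion X)) +
        dist ((q.1 : Completion X → Completion X) ((p.2 : Completion X)))
          ((p.1 : Completion X → Completion X) ((p.2 : Completion X))) := by
    intro q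
    have htri := dist_triangle ((q.1 : Completion X → Completion X) ((q.2 : Completion X)))
      ((q.1 : Completion X → Completion X) ((p.2 : Completion X)))
      ((p.1 : Completion X → Completion X) ((p.2 : Completion X)))
    rw [(ellis_isometry q.1.2).dist_eq] at htri
    exact htri
  have t1 : Tendsto (fun q : ↥(Ellis X) × ↥Y =>
      dist ((q.2 : Completion X)) ((p.2 : Completion X))) (𝓝 p) (𝓝 0) := by
    have ht : Tendsto (fun q : ↥(Ellis X) × ↥Y => ((q.2 : Completion X))) (𝓝 p)
        (𝓝 ((p.2 : Completion X))) :=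
      ((continuous_subtype_val.comp continuous_snd).tendsto p)
    simpa using ht.dist (tendsto_const_nhds (x := ((p.2 : Completion X))))
  have t2 : Tendsto (fun q : ↥(Ellis X) × ↥Y =>
      dist ((q.1 : Completion X → Completion X) ((p.2 : Completion X)))
        ((p.1 : Completion X → Completion X) ((p.2 : Completion X)))) (𝓝 p) (𝓝 0) := by
    have ht : Tendsto (fun q : ↥(Ellis X) × ↥Y =>
        (q.1 : Completion X → Completion X) ((p.2 : Completion X))) (𝓝 p)
        (𝓝 ((p.1 : Completion X → Completion X) ((p.2 : Completion X)))) :=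
      (((continuous_apply _).comp (continuous_subtype_val.comp continuous_fst)).tendsto p)
    simpa using ht.dist (tendsto_const_nhds
      (x := ((p.1 : Completion X → Completion X) ((p.2 : Completion X)))))
  have hsum : Tendsto (fun q : ↥(Ellis X) × ↥Y =>
      dist ((q.2 : Completion X)) ((p.2 : Completion X)) +
        dist ((q.1 : Completion X → Completion X) ((p.2 : Completion X)))
          ((p.1 : Completion X → Completion X) ((p.2 : Completion X)))) (𝓝 p) (𝓝 0) := by
    simpa using t1.add t2
  exact squeeze_zero (fun q => dist_nonneg) hb hsum

lemma isCompact_fiberK [SeparableSpace X] (hCI : IsoCauchyIndivisible X) {y₀ : Completion X}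
    (hy : y₀ ∈ XcupXp X) (z : Completion X) :
    IsCompact {fe : ↥(Ellis X) | (fe : Completion X → Completion X) y₀ = z} := by
  rcases isEmpty_or_nonempty X with hX | hX
  · exact ((isEmpty_completion hX).elim y₀)
  set s : ℕ → X := denseSeq X with hsdef
  set sc : ℕ → Completion X := fun k => ((s k : X) : Completion X) with hscdef
  set R : ↥(Ellis X) → (ℕ → Completion X) :=
    fun fe k => (fe : Completion X → Completion X) (sc k) with hRdef
  have hRcont : Continuous R :=
    continuous_pi fun k => (continuous_apply (sc k)).comp continuous_subtype_val
  have hRind : Topology.IsInducing R := by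
    rw [Topology.isInducing_iff_nhds]
    intro fe
    refine le_antisymm (hRcont.tendsto fe).le_comap ?_
    intro U hU
    rw [nhds_induced ((↑) : ↥(Ellis X) → (Completion X → Completion X)) fe,
      Filter.mem_comap] at hU
    obtain ⟨V, hV, hVU⟩ := hU
    rw [nhds_pi, Filter.mem_pi] at hV
    obtain ⟨I, hIfin, t, ht, htV⟩ := hV
    have hball : ∀ w : Completion X, ∃ ε : ℝ, 0 < ε ∧
        Metric.ball ((fe : Completion X → Completion X) w) ε ⊆ t w := fun w =>
      Metric.mem_nhds_iff.mp (ht w)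
    choose ε hεpos hεball using hball
    have hdsc : DenseRange sc :=
      Completion.denseRange_coe.comp (denseRange_denseSeq X) (Completion.continuous_coe X)
    have hk : ∀ w : Completion X, ∃ k : ℕ, dist w (sc k) < ε w / 3 := fun w =>
      Metric.denseRange_iff.mp hdsc w (ε w / 3) (by have := hεpos w; positivity)
    choose kk hkk using hk
    rw [Filter.mem_comap]
    refine ⟨⋂ w ∈ I, {φ : ℕ → Completion X |
      dist (φ (kk w)) ((fe : Completion X → Completion X) (sc (kk w))) < ε w / 3}, ?_, ?_⟩
    · refine (Filter.biInter_mem hIfin).mpr fun w hw => ?_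
      have hop : IsOpen {φ : ℕ → Completion X |
          dist (φ (kk w)) ((fe : Completion X → Completion X) (sc (kk w))) < ε w / 3} :=
        isOpen_lt ((continuous_apply _).dist continuous_const) continuous_const
      refine hop.mem_nhds ?_
      show dist (R fe (kk w)) ((fe : Completion X → Completion X) (sc (kk w))) < ε w / 3
      have : R fe (kk w) = (fe : Completion X → Completion X) (sc (kk w)) := rfl
      rw [this, dist_self]
      exact div_pos (hεpos w) (by norm_num)
    · intro fe' hfe'
      apply hVU
      show (fe' : Completion X → Completion X) ∈ V
      apply htV
      rw [Set.mem_pi]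
      intro w hw
      apply hεball w
      rw [Metric.mem_ball]
      have h2 := Set.mem_iInter₂.mp hfe' w hw
      have h2' : dist ((fe' : Completion X → Completion X) (sc (kk w)))
          ((fe : Completion X → Completion X) (sc (kk w))) < ε w / 3 := h2
      have h1 : dist ((fe' : Completion X → Completion X) w)
          ((fe : Completion X → Completion X) w) ≤
          dist ((fe' : Completion X → Completion X) w)
            ((fe' : Completion X → Completion X) (sc (kk w))) +
          dist ((fe' : Completion X → Completion X) (sc (kk w)))
            ((fe : Completion X → Completion X) (sc (kk w))) +
          dist ((fe : Completion X → Completion X) (sc (kk w)))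
            ((fe : Completion X → Completion X) w) := dist_triangle4 _ _ _ _
      rw [(ellis_isometry fe'.2).dist_eq, (ellis_isometry fe.2).dist_eq] at h1
      have h3 := hkk w
      have h4 : dist (sc (kk w)) w = dist w (sc (kk w)) := dist_comm _ _
      linarith
  rw [hRind.isCompact_iff]
  apply IsSeqCompact.isCompact
  intro u hu
  choose fe hfeK hfeR using hu
  have hz3 : Tendsto (fun n => ((fe n : ↥(Ellis X)) : Completion X → Completion X) y₀)
      atTop (𝓝 z) := by
    have heq : (fun n => ((fe n : ↥(Ellis X)) : Completion X → Completion X) y₀) = fun _ => z :=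
      funext fun n => hfeK n
    rw [heq]
    exact tendsto_const_nhds
  obtain ⟨φ, hφ, G, hGe, hGconv⟩ := main_lemma hCI (fun n => (fe n).2) hy hz3
  refine ⟨R ⟨G, hGe⟩, ⟨⟨G, hGe⟩, ?_, rfl⟩, φ, hφ, ?_⟩
  · show G y₀ = z
    exact tendsto_nhds_unique (hGconv y₀) (hz3.comp hφ.tendsto_atTop)
  · rw [tendsto_pi_nhds]
    intro k
    show Tendsto _ atTop (𝓝 (G (sc k)))
    refine (hGconv (sc k)).congr fun n => ?_
    exact congrFun (hfeR (φ n)) k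

end Aux6
/-- Theorem 5.12 (maximality part): `X ∪ X_p` is the maximal subset of `X ∪ X_l`
containing `X` on which `ω(f,y) = (y, f y)` is proper: `ω` is proper on `X ∪ X_p`,
and any `Y` with `X ⊆ Y ⊆ X ∪ X_l` on which `ω` is proper satisfies `Y ⊆ X ∪ X_p`. -/
theorem XcupXp_maximal_proper (X : Type*) [MetricSpace X]
    [TopologicalSpace.SeparableSpace X] (hCI : IsoCauchyIndivisible X) :
    (IsProperMap (fun p : ↥(Ellis X) × ↥(XcupXp X) =>
        (p.2, (p.1 : Completion X → Completion X) (p.2 : Completion X)))) ∧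
    ∀ Y : Set (Completion X),
      Set.range ((↑) : X → Completion X) ⊆ Y → Y ⊆ XcupXl X →
      IsProperMap (fun p : ↥(Ellis X) × ↥Y =>
        (p.2, (p.1 : Completion X → Completion X) (p.2 : Completion X))) →
      Y ⊆ XcupXp X := by
  constructor
  · -- properness of ω on E × (X ∪ X_p)
    rw [isProperMap_iff_isClosedMap_and_compact_fibers]
    refine ⟨continuous_snd.prodMk continuous_ev2, ?_, ?_⟩
    · -- closed map
      intro C hC
      apply IsSeqClosed.isClosed
      intro u q hu hq
      choose c hcC hcω using hu
      obtain ⟨y₀, z⟩ := q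
      have h1 : Tendsto (fun n => (c n).2) atTop (𝓝 y₀) := by
        have hfst := (continuous_fst.tendsto (y₀, z)).comp hq
        exact hfst.congr fun n => (congrArg Prod.fst (hcω n)).symm
      have h1' : Tendsto (fun n => ((c n).2 : Completion X)) atTop (𝓝 (y₀ : Completion X)) :=
        (continuous_subtype_val.tendsto _).comp h1
      have h2 : Tendsto (fun n => ((c n).1 : Completion X → Completion X)
          ((c n).2 : Completion X)) atTop (𝓝 z) := by
        have hsnd := (continuous_snd.tendsto (y₀, z)).comp hq
        exact hsnd.congr fun n => (congrArg Prod.snd (hcω n)).symm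
      have h3 : Tendsto (fun n => ((c n).1 : Completion X → Completion X)
          (y₀ : Completion X)) atTop (𝓝 z) := by
        refine h2.congr_dist ?_
        have heq : ∀ n, dist (((c n).1 : Completion X → Completion X) ((c n).2 : Completion X))
            (((c n).1 : Completion X → Completion X) (y₀ : Completion X))
            = dist ((c n).2 : Completion X) (y₀ : Completion X) :=
          fun n => (ellis_isometry (c n).1.2).dist_eq _ _
        have hd : Tendsto (fun n => dist ((c n).2 : Completion X) (y₀ : Completion X))
            atTop (𝓝 0) := by
          simpa using h1'.dist (tendsto_const_nhds (x := (y₀ : Completion X)))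
        exact hd.congr fun n => (heq n).symm
      obtain ⟨φ, hφ, G, hGe, hGconv⟩ := main_lemma hCI (fun n => (c n).1.2) y₀.2 h3
      have hcp : Tendsto (fun n => c (φ n)) atTop (𝓝 (⟨G, hGe⟩, y₀)) := by
        have hfst : Tendsto (fun n => (c (φ n)).1) atTop (𝓝 (⟨G, hGe⟩ : ↥(Ellis X))) := by
          rw [tendsto_subtype_rng, tendsto_pi_nhds]
          exact fun w => hGconv w
        have hsnd : Tendsto (fun n => (c (φ n)).2) atTop (𝓝 y₀) := h1.comp hφ.tendsto_atTop
        exact hfst.prodMk_nhds hsnd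
      have hpC : (⟨G, hGe⟩, y₀) ∈ C :=
        hC.mem_of_tendsto hcp (Filter.Eventually.of_forall (fun n => hcC (φ n)))
      refine ⟨(⟨G, hGe⟩, y₀), hpC, ?_⟩
      have hz2 : Tendsto (fun n => ((c (φ n)).1 : Completion X → Completion X)
          (y₀ : Completion X)) atTop (𝓝 z) := h3.comp hφ.tendsto_atTop
      have hGz : G (y₀ : Completion X) = z :=
        tendsto_nhds_unique (hGconv (y₀ : Completion X)) hz2
      show ((y₀ : ↥(XcupXp X)), G (y₀ : Completion X)) = (y₀, z)
      rw [hGz]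
    · -- compact fibers
      intro q
      obtain ⟨y₀, z⟩ := q
      have hfib : (fun p : ↥(Ellis X) × ↥(XcupXp X) =>
          (p.2, (p.1 : Completion X → Completion X) (p.2 : Completion X))) ⁻¹' {(y₀, z)}
          = {fe : ↥(Ellis X) |
              (fe : Completion X → Completion X) ((y₀ : Completion X)) = z} ×ˢ {y₀} := by
        ext p
        simp only [Set.mem_preimage, Set.mem_singleton_iff, Prod.mk.injEq, Set.mem_prod,
          Set.mem_setOf_eq]
        constructor
        · rintro ⟨hp1, hp2⟩
          refine ⟨?_, hp1⟩
          rw [← hp1]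
          exact hp2
        · rintro ⟨hp1, hp2⟩
          refine ⟨hp2, ?_⟩
          rw [hp2]
          exact hp1
      rw [hfib]
      exact (isCompact_fiberK hCI y₀.2 z).prod isCompact_singleton
  · -- maximality
    intro Y hXY hYl hprop y hyY
    rcases hYl hyY with hx | hXl
    · exact Or.inl hx
    · obtain ⟨g, x, hdivs, hcau, hlim⟩ := hXl
      set seq : ℕ → ↥(Ellis X) × ↥Y := fun n =>
        (⟨hatIso (g n).symm, hatIso_mem_ellis _⟩,
         ⟨((g n x : X) : Completion X), hXY (Set.mem_range_self _)⟩) with hseqdef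
      set ω : ↥(Ellis X) × ↥Y → ↥Y × Completion X := fun p =>
        (p.2, (p.1 : Completion X → Completion X) (p.2 : Completion X)) with hωdef
      have himg : Tendsto (fun n => ω (seq n)) atTop (𝓝 (⟨y, hyY⟩, ((x : X) : Completion X))) := by
        have hfst : Tendsto (fun n => (seq n).2) atTop (𝓝 (⟨y, hyY⟩ : ↥Y)) := by
          rw [tendsto_subtype_rng]
          exact hlim
        have hsnd : Tendsto (fun n => ((seq n).1 : Completion X → Completion X)
            ((seq n).2 : Completion X)) atTop (𝓝 ((x : X) : Completion X)) := by
          have heq : (fun n => ((seq n).1 : Completion X → Completion X)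
              ((seq n).2 : Completion X)) = fun _ => ((x : X) : Completion X) := by
            funext n
            show hatIso (g n).symm ((g n x : X) : Completion X) = _
            rw [hatIso_coe, IsometryEquiv.symm_apply_apply]
          rw [heq]
          exact tendsto_const_nhds
        exact hfst.prodMk_nhds hsnd
      have hmcp : MapClusterPt (⟨y, hyY⟩, ((x : X) : Completion X)) (Filter.map seq atTop) ω := by
        show ClusterPt _ (Filter.map ω (Filter.map seq atTop))
        rw [Filter.map_map]
        have hne : (Filter.map (ω ∘ seq) atTop).NeBot := Filter.map_neBot
        exact Filter.neBot_of_le (le_inf himg le_rfl)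
      obtain ⟨p, hωp, hclp⟩ := hprop.clusterPt_of_mapClusterPt hmcp
      have hcl2 : ClusterPt ((p.1 : Completion X → Completion X) ((x : X) : Completion X))
          (Filter.map (fun pp : ↥(Ellis X) × ↥Y =>
            (pp.1 : Completion X → Completion X) ((x : X) : Completion X))
            (Filter.map seq atTop)) := by
        refine ClusterPt.map (f := fun pp : ↥(Ellis X) × ↥Y =>
          (pp.1 : Completion X → Completion X) ((x : X) : Completion X)) hclp
          (((continuous_apply _).comp
            (continuous_subtype_val.comp continuous_fst)).continuousAt)
          Filter.tendsto_map
      rw [Filter.map_map] at hcl2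
      have hfun : ((fun pp : ↥(Ellis X) × ↥Y =>
          (pp.1 : Completion X → Completion X) ((x : X) : Completion X)) ∘ seq)
          = fun n => (((g n).symm x : X) : Completion X) := by
        funext n
        show hatIso (g n).symm ((x : X) : Completion X) = _
        rw [hatIso_coe]
      rw [hfun] at hcl2
      obtain ⟨ψ, hψ, hψconv⟩ := TopologicalSpace.FirstCountableTopology.tendsto_subseq hcl2
      have hcau2 : CauchySeq (fun n => ((g (ψ n)).symm x)) := by
        apply cauchySeq_coe_iff.mp
        exact hψconv.cauchySeq
      refine Or.inr ⟨g ∘ ψ, x, divergentSeq_comp hdivs hψ, ?_, hcau2, ?_⟩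
      · exact hcau.comp_tendsto hψ.tendsto_atTop
      · exact hlim.comp hψ.tendsto_atTop

end
end

section
/- Let ℤ carry the discrete metric, Iso(ℤ) the group of all bijections of ℤ with the metric ϱ(f,g) = Σ_{i=1}^∞ 3^{-i} d(f z_i, g z_i) for a fixed enumeration {z_i} of ℤ, and let Iso(Iso(ℤ)) be the group of surjective isometries of (Iso(ℤ), ϱ). Then the evaluation action of Iso(Iso(ℤ)) on Iso(ℤ) is proper: if {T_n} is a sequence in Iso(Iso(ℤ)) and f, g ∈ Iso(ℤ) are such that T_n(f) → g in (Iso(ℤ), ϱ), then {T_n} converges in Iso(Iso(ℤ)) with the topology of pointwise convergence; in particular every limit set L(f) is empty. -/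
open Filter Topology

noncomputable section

/-- The discrete metric on `ℤ`. -/
def dZ (m n : ℤ) : ℝ := if m = n then 0 else 1

/-- The metric `ϱ(f,g) = Σ_{i=1}^∞ 3⁻ⁱ d(f zᵢ, g zᵢ)` on `Iso(ℤ) = Perm ℤ`, for a
fixed enumeration `z` of `ℤ`. -/
def rhoZ (z : ℕ → ℤ) (f g : Equiv.Perm ℤ) : ℝ :=
  ∑' i : ℕ, (1 / 3 : ℝ) ^ (i + 1) * dZ (f (z i)) (g (z i))

/-- `Iso(Iso(ℤ))`: the surjective isometries of `(Iso(ℤ), ϱ)`. -/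
def IsoIsoZ (z : ℕ → ℤ) : Type :=
  { T : Equiv.Perm ℤ → Equiv.Perm ℤ //
      Function.Surjective T ∧ ∀ f g : Equiv.Perm ℤ, rhoZ z (T f) (T g) = rhoZ z f g }

/-- `S` is a cluster point of the net `T` in `Iso(Iso(ℤ))` for the topology of
pointwise convergence on `(Iso(ℤ), ϱ)`. -/
def ClusterPW (z : ℕ → ℤ) {ι : Type*} [Preorder ι] (T : ι → IsoIsoZ z)
    (S : IsoIsoZ z) : Prop :=
  ∀ ε : ℝ, 0 < ε → ∀ F : Finset (Equiv.Perm ℤ), ∀ i₀ : ι,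
    ∃ i, i₀ ≤ i ∧ ∀ f ∈ F, rhoZ z ((T i).1 f) (S.1 f) < ε

lemma dZ_nonneg (m n : ℤ) : 0 ≤ dZ m n := by unfold dZ; split <;> norm_num
lemma dZ_le_one (m n : ℤ) : dZ m n ≤ 1 := by unfold dZ; split <;> norm_num
lemma dZ_eq_zero (m n : ℤ) (h : m = n) : dZ m n = 0 := by simp [dZ, h]
lemma dZ_eq_one (m n : ℤ) (h : m ≠ n) : dZ m n = 1 := by simp [dZ, h]
lemma dZ_mem (m n : ℤ) : dZ m n = 0 ∨ dZ m n = 1 := by unfold dZ; split <;> simp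

lemma summable_aux (a : ℕ → ℝ) (h0 : ∀ i, 0 ≤ a i) (h1 : ∀ i, a i ≤ 1) :
    Summable (fun i => (1/3:ℝ)^(i+1) * a i) := by
  have hg : Summable (fun i : ℕ => (1/3:ℝ) * (1/3)^i) :=
    (summable_geometric_of_lt_one (by norm_num) (by norm_num)).mul_left _
  refine Summable.of_nonneg_of_le (fun i => mul_nonneg (by positivity) (h0 i))
    (fun i => ?_) hg
  calc (1/3:ℝ)^(i+1) * a i ≤ (1/3:ℝ)^(i+1) * 1 :=
        mul_le_mul_of_nonneg_left (h1 i) (by positivity)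
    _ = (1/3) * (1/3:ℝ)^i := by ring

lemma tail_geom (n : ℕ) : ∑' k : ℕ, (1/3:ℝ)^(k + n + 1) = (1/2) * (1/3:ℝ)^n := by
  have h : ∀ k : ℕ, (1/3:ℝ)^(k + n + 1) = (1/3:ℝ)^k * ((1/3)^(n+1)) := by
    intro k; rw [← pow_add]; ring_nf
  simp_rw [h]
  rw [tsum_mul_right, tsum_geometric_of_lt_one (by norm_num) (by norm_num)]
  ring

lemma summable_dZ (z : ℕ → ℤ) (f g : Equiv.Perm ℤ) :
    Summable (fun i => (1/3:ℝ)^(i+1) * dZ (f (z i)) (g (z i))) :=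
  summable_aux _ (fun i => dZ_nonneg _ _) (fun i => dZ_le_one _ _)

lemma rhoZ_nonneg (z : ℕ → ℤ) (f g : Equiv.Perm ℤ) : 0 ≤ rhoZ z f g :=
  tsum_nonneg (fun i => mul_nonneg (by positivity) (dZ_nonneg _ _))

/-- base-3 digit injectivity -/
lemma digits_inj (a b : ℕ → ℝ) (ha : ∀ i, a i = 0 ∨ a i = 1)
    (hb : ∀ i, b i = 0 ∨ b i = 1)
    (h : ∑' i, (1/3:ℝ)^(i+1) * a i = ∑' i, (1/3:ℝ)^(i+1) * b i) :
    ∀ i, a i = b i := by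
  have ha0 : ∀ i, 0 ≤ a i := fun i => by rcases ha i with h'|h' <;> rw [h'] <;> norm_num
  have ha1 : ∀ i, a i ≤ 1 := fun i => by rcases ha i with h'|h' <;> rw [h'] <;> norm_num
  have hb0 : ∀ i, 0 ≤ b i := fun i => by rcases hb i with h'|h' <;> rw [h'] <;> norm_num
  have hb1 : ∀ i, b i ≤ 1 := fun i => by rcases hb i with h'|h' <;> rw [h'] <;> norm_num
  -- sub-lemma: if a,b agree below n, a n = 1, b n = 0 then tsum b < tsum a
  have main : ∀ (a b : ℕ → ℝ), (∀ i, 0 ≤ a i) → (∀ i, a i ≤ 1) → (∀ i, 0 ≤ b i) →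
      (∀ i, b i ≤ 1) → ∀ n, (∀ j, j < n → a j = b j) → a n = 1 → b n = 0 →
      ∑' i, (1/3:ℝ)^(i+1) * b i < ∑' i, (1/3:ℝ)^(i+1) * a i := by
    intro a b ha0 ha1 hb0 hb1 n hagree han hbn
    have hsa := summable_aux a ha0 ha1
    have hsb := summable_aux b hb0 hb1
    have splita := (Summable.sum_add_tsum_nat_add (f := fun i => (1/3:ℝ)^(i+1) * a i) (n+1) hsa).symm
    have splitb := (Summable.sum_add_tsum_nat_add (f := fun i => (1/3:ℝ)^(i+1) * b i) (n+1) hsb).symm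
    rw [splita, splitb]
    have hfin : ∑ i ∈ Finset.range (n+1), (1/3:ℝ)^(i+1) * b i + (1/3:ℝ)^(n+1)
        = ∑ i ∈ Finset.range (n+1), (1/3:ℝ)^(i+1) * a i := by
      have hsum_eq : ∑ i ∈ Finset.range n, (1/3:ℝ)^(i+1) * a i
          = ∑ i ∈ Finset.range n, (1/3:ℝ)^(i+1) * b i :=
        Finset.sum_congr rfl (fun j hj => by rw [hagree j (Finset.mem_range.1 hj)])
      rw [Finset.sum_range_succ, Finset.sum_range_succ, han, hbn, hsum_eq]
      ring
    have hsb' : Summable (fun k => (1/3:ℝ)^(k+(n+1)+1) * b (k+(n+1))) :=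
      (summable_nat_add_iff (f := fun i => (1/3:ℝ)^(i+1) * b i) (n+1)).2 hsb
    have hge : Summable (fun k : ℕ => (1/3:ℝ)^(k+(n+1)+1)) := by
      have hg : Summable (fun k : ℕ => (1/3:ℝ)^(n+2) * (1/3)^k) :=
        (summable_geometric_of_lt_one (by norm_num : (0:ℝ) ≤ 1/3) (by norm_num)).mul_left _
      refine hg.congr (fun k => ?_)
      rw [← pow_add]; congr 1; omega
    have hle : ∀ k : ℕ, (1/3:ℝ)^(k+(n+1)+1) * b (k+(n+1)) ≤ (1/3:ℝ)^(k+(n+1)+1) := by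
      intro k
      nth_rewrite 2 [← mul_one ((1/3:ℝ)^(k+(n+1)+1))]
      exact mul_le_mul_of_nonneg_left (hb1 _) (by positivity)
    have htail_b : ∑' k, (1/3:ℝ)^(k+(n+1)+1) * b (k+(n+1)) ≤ (1/2) * (1/3:ℝ)^(n+1) := by
      have h2 := Summable.tsum_le_tsum hle hsb' hge
      rwa [tail_geom (n+1)] at h2
    have htail_a : 0 ≤ ∑' k, (1/3:ℝ)^(k+(n+1)+1) * a (k+(n+1)) :=
      tsum_nonneg fun k => mul_nonneg (by positivity) (ha0 _)
    have : (1/2:ℝ) * (1/3:ℝ)^(n+1) < (1/3:ℝ)^(n+1) := by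
      have : (0:ℝ) < (1/3:ℝ)^(n+1) := by positivity
      linarith
    calc ∑ i ∈ Finset.range (n+1), (1/3:ℝ)^(i+1) * b i
          + ∑' k, (1/3:ℝ)^(k+(n+1)+1) * b (k+(n+1))
        ≤ ∑ i ∈ Finset.range (n+1), (1/3:ℝ)^(i+1) * b i + (1/2) * (1/3:ℝ)^(n+1) := by
          linarith
      _ < ∑ i ∈ Finset.range (n+1), (1/3:ℝ)^(i+1) * b i + (1/3:ℝ)^(n+1) := by linarith
      _ = ∑ i ∈ Finset.range (n+1), (1/3:ℝ)^(i+1) * a i := hfin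
      _ ≤ _ := by linarith
  intro n
  induction n using Nat.strong_induction_on with
  | _ n ih =>
    by_contra hne
    rcases ha n with h1|h1 <;> rcases hb n with h2|h2
    · exact hne (by rw [h1, h2])
    · exact absurd h (ne_of_lt (main b a hb0 hb1 ha0 ha1 n (fun j hj => (ih j hj).symm) h2 h1))
    · exact absurd h (ne_of_gt (main a b ha0 ha1 hb0 hb1 n ih h1 h2))
    · exact hne (by rw [h1, h2])

lemma tail_le (a : ℕ → ℝ) (h0 : ∀ i, 0 ≤ a i) (h1 : ∀ i, a i ≤ 1) (N : ℕ) :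
    ∑' k : ℕ, (1/3:ℝ)^(k+N+1) * a (k+N) ≤ (1/2) * (1/3:ℝ)^N := by
  have hsa : Summable (fun k => (1/3:ℝ)^(k+N+1) * a (k+N)) :=
    (summable_nat_add_iff (f := fun i => (1/3:ℝ)^(i+1) * a i) N).2 (summable_aux a h0 h1)
  have hge : Summable (fun k : ℕ => (1/3:ℝ)^(k+N+1)) := by
    have hg : Summable (fun k : ℕ => (1/3:ℝ)^(N+1) * (1/3)^k) :=
      (summable_geometric_of_lt_one (by norm_num : (0:ℝ) ≤ 1/3) (by norm_num)).mul_left _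
    refine hg.congr (fun k => ?_)
    rw [← pow_add]; congr 1; omega
  have hle : ∀ k : ℕ, (1/3:ℝ)^(k+N+1) * a (k+N) ≤ (1/3:ℝ)^(k+N+1) := by
    intro k
    nth_rewrite 2 [← mul_one ((1/3:ℝ)^(k+N+1))]
    exact mul_le_mul_of_nonneg_left (h1 _) (by positivity)
  have h2 := Summable.tsum_le_tsum hle hsa hge
  rwa [tail_geom N] at h2

/-- An isometry of `(Perm ℤ, ϱ)` preserves pointwise agreement. -/
lemma rho_agree (z : ℕ → ℤ) (hz : Function.Bijective z) {f g f' g' : Equiv.Perm ℤ}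
    (h : rhoZ z f g = rhoZ z f' g') (m : ℤ) : (f m = g m ↔ f' m = g' m) := by
  obtain ⟨i, rfl⟩ := hz.2 m
  have hd := digits_inj (fun i => dZ (f (z i)) (g (z i))) (fun i => dZ (f' (z i)) (g' (z i)))
    (fun i => dZ_mem _ _) (fun i => dZ_mem _ _) h i
  constructor
  · intro he; by_contra hne
    rw [dZ_eq_zero _ _ he, dZ_eq_one _ _ hne] at hd; norm_num at hd
  · intro he; by_contra hne
    rw [dZ_eq_one _ _ hne, dZ_eq_zero _ _ he] at hd; norm_num at hd

lemma T_agree (z : ℕ → ℤ) (hz : Function.Bijective z) (T : IsoIsoZ z)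
    (p q : Equiv.Perm ℤ) (m : ℤ) : (T.1 p) m = (T.1 q) m ↔ p m = q m :=
  rho_agree z hz (T.2.2 p q) m

/-- Every isometry of `(Perm ℤ, ϱ)` is a left translation: `T h = (T f) ∘ f⁻¹ ∘ h`. -/
lemma structure_lemma (z : ℕ → ℤ) (hz : Function.Bijective z) (T : IsoIsoZ z)
    (f h : Equiv.Perm ℤ) (m : ℤ) : (T.1 h) m = (T.1 f) (f.symm (h m)) := by
  by_cases hcase : h m = f m
  · have h1 : (T.1 h) m = (T.1 f) m := (T_agree z hz T h f m).2 hcase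
    rw [h1, hcase, Equiv.symm_apply_apply]
  · set g := T.1 f with hg
    set a := m with hadef
    set b := f.symm (h m) with hbdef
    have hb : f b = h m := f.apply_symm_apply _
    have hab : a ≠ b := by
      intro e
      apply hcase
      rw [← hb, ← e]
    set k : Equiv.Perm ℤ := f.trans (Equiv.swap (f a) (f b)) with hk
    have hka : k a = h m := by
      rw [hk, Equiv.trans_apply, Equiv.swap_apply_left, hb]
    have h1 : (T.1 h) m = (T.1 k) m := ((T_agree z hz T h k m).2 (by rw [hka])).symm ▸ rfl
    have h1' : (T.1 h) m = (T.1 k) m := ((T_agree z hz T k h m).2 (by rw [hka])).symm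
    rw [h1']
    -- goal : T.1 k a = g b
    have h2 : (T.1 k) a ≠ g a := by
      intro e
      have := (T_agree z hz T k f a).1 e
      rw [hka] at this
      exact hcase this
    have h3 : ∀ x, x ≠ a → x ≠ b → (T.1 k) x = g x := by
      intro x hxa hxb
      apply (T_agree z hz T k f x).2
      rw [hk, Equiv.trans_apply, Equiv.swap_apply_of_ne_of_ne]
      · exact fun e => hxa (f.injective e)
      · exact fun e => hxb (f.injective e)
    set x := (T.1 k) a with hx
    set c := g.symm x with hc
    have hgc : g c = x := g.apply_symm_apply x
    have hca : c ≠ a := by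
      intro e
      rw [e] at hgc
      exact h2 hgc.symm
    rcases eq_or_ne c b with e | e
    · rw [← hgc, e]
    · exfalso
      have h4 : (T.1 k) c = g c := h3 c hca e
      have h5 : (T.1 k) c = (T.1 k) a := by rw [h4, hgc]
      exact hca ((T.1 k).injective h5)

/-- convergence in `ϱ` is pointwise convergence -/
lemma tendsto_rho_iff (z : ℕ → ℤ) (hz : Function.Bijective z) {ι : Type*} (l : Filter ι)
    (F : ι → Equiv.Perm ℤ) (g : Equiv.Perm ℤ) :
    Tendsto (fun i => rhoZ z (F i) g) l (𝓝 0) ↔ ∀ m : ℤ, ∀ᶠ i in l, F i m = g m := by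
  constructor
  · intro ht m
    obtain ⟨j, rfl⟩ := hz.2 m
    have hpos : (0:ℝ) < (1/3)^(j+1) := by positivity
    filter_upwards [(Metric.tendsto_nhds.1 ht) _ hpos] with i hi
    by_contra hne
    have hterm : (1/3:ℝ)^(j+1) ≤ rhoZ z (F i) g := by
      have he : (1/3:ℝ)^(j+1) * dZ (F i (z j)) (g (z j)) = (1/3:ℝ)^(j+1) := by
        rw [dZ_eq_one _ _ hne, mul_one]
      rw [← he]
      exact Summable.le_tsum (summable_dZ z (F i) g) j
        (fun k _ => mul_nonneg (by positivity) (dZ_nonneg _ _))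
    rw [Real.dist_eq, sub_zero, abs_of_nonneg (rhoZ_nonneg z (F i) g)] at hi
    linarith
  · intro hp
    rw [Metric.tendsto_nhds]
    intro ε hε
    obtain ⟨N, hN⟩ : ∃ N : ℕ, (1/3:ℝ)^N < ε :=
      exists_pow_lt_of_lt_one hε (by norm_num)
    have hev : ∀ᶠ i in l, ∀ j ∈ Finset.range N, F i (z j) = g (z j) :=
      (Filter.eventually_all_finset _).2 (fun j _ => hp (z j))
    filter_upwards [hev] with i hi
    rw [Real.dist_eq, sub_zero, abs_of_nonneg (rhoZ_nonneg z (F i) g)]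
    have hsplit := (Summable.sum_add_tsum_nat_add
      (f := fun j => (1/3:ℝ)^(j+1) * dZ (F i (z j)) (g (z j))) N (summable_dZ z (F i) g)).symm
    have hzero : ∑ j ∈ Finset.range N, (1/3:ℝ)^(j+1) * dZ (F i (z j)) (g (z j)) = 0 := by
      refine Finset.sum_eq_zero (fun j hj => ?_)
      rw [dZ_eq_zero _ _ (hi j hj), mul_zero]
    have htail : ∑' k : ℕ, (1/3:ℝ)^(k+N+1) * dZ (F i (z (k+N))) (g (z (k+N)))
        ≤ (1/2) * (1/3:ℝ)^N :=
      tail_le (fun j => dZ (F i (z j)) (g (z j))) (fun j => dZ_nonneg _ _)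
        (fun j => dZ_le_one _ _) N
    have hx : (0:ℝ) < (1/3:ℝ)^N := by positivity
    calc rhoZ z (F i) g
        = ∑ j ∈ Finset.range N, (1/3:ℝ)^(j+1) * dZ (F i (z j)) (g (z j))
          + ∑' k : ℕ, (1/3:ℝ)^(k+N+1) * dZ (F i (z (k+N))) (g (z (k+N))) := hsplit
      _ ≤ 0 + (1/2) * (1/3:ℝ)^N := by rw [hzero]; linarith
      _ < ε := by linarith

lemma key_lemma (z : ℕ → ℤ) (hz : Function.Bijective z) {ι : Type*} (l : Filter ι)
    (T : ι → IsoIsoZ z) (f g : Equiv.Perm ℤ)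
    (hc : Tendsto (fun i => rhoZ z ((T i).1 f) g) l (𝓝 0)) :
    ∃ S : IsoIsoZ z, ∀ h : Equiv.Perm ℤ,
      Tendsto (fun i => rhoZ z ((T i).1 h) (S.1 h)) l (𝓝 0) := by
  set c : Equiv.Perm ℤ := f.symm.trans g with hcdef
  refine ⟨⟨fun h => h.trans c, ?_, ?_⟩, ?_⟩
  · intro h; exact ⟨h.trans c.symm, by ext m; simp⟩
  · intro p q
    unfold rhoZ
    refine tsum_congr (fun i => ?_)
    congr 1
    simp only [Equiv.trans_apply]
    unfold dZ
    by_cases e : p (z i) = q (z i)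
    · simp [e]
    · rw [if_neg e, if_neg (fun e2 => e (c.injective e2))]
  · intro h
    rw [tendsto_rho_iff z hz]
    intro m
    have hptw : ∀ m', ∀ᶠ i in l, ((T i).1 f) m' = g m' := (tendsto_rho_iff z hz l _ g).1 hc
    filter_upwards [hptw (f.symm (h m))] with i hi
    rw [structure_lemma z hz (T i) f h m, hi]
    simp [hcdef, Equiv.trans_apply]

/-- Proposition 6.6: the evaluation action of `Iso(Iso(ℤ))` on `(Iso(ℤ), ϱ)` is
proper: if `T_n(f) → g` in `(Iso(ℤ), ϱ)` for a sequence `(T_n)` in `Iso(Iso(ℤ))`,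
then `(T_n)` converges pointwise to an element of `Iso(Iso(ℤ))`; in particular, no
net in `Iso(Iso(ℤ))` without convergent subnet (i.e. without cluster point) has
`T_i(f) → g`, so every limit set `L(f)` is empty. -/
theorem isoIsoZ_action_proper (z : ℕ → ℤ) (hz : Function.Bijective z) :
    (∀ (T : ℕ → IsoIsoZ z) (f g : Equiv.Perm ℤ),
      Tendsto (fun n => rhoZ z ((T n).1 f) g) atTop (𝓝 0) →
      ∃ S : IsoIsoZ z, ∀ h : Equiv.Perm ℤ,
        Tendsto (fun n => rhoZ z ((T n).1 h) (S.1 h)) atTop (𝓝 0)) ∧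
    ∀ (ι : Type) [Nonempty ι] [Preorder ι] [IsDirected ι (· ≤ ·)],
      ∀ T : ι → IsoIsoZ z, (∀ S : IsoIsoZ z, ¬ ClusterPW z T S) →
        ∀ f g : Equiv.Perm ℤ,
          ¬ Tendsto (fun i => rhoZ z ((T i).1 f) g) atTop (𝓝 0) := by
  constructor
  · intro T f g hc
    exact key_lemma z hz atTop T f g hc
  · intro ι _ _ _ T hnc f g hc
    obtain ⟨S, hS⟩ := key_lemma z hz atTop T f g hc
    apply hnc S
    intro ε hε F i₀
    have hev : ∀ᶠ i in (atTop : Filter ι), ∀ h ∈ F, rhoZ z ((T i).1 h) (S.1 h) < ε := by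
      refine (Filter.eventually_all_finset _).2 (fun h _ => ?_)
      filter_upwards [Metric.tendsto_nhds.1 (hS h) ε hε] with i hi
      rwa [Real.dist_eq, sub_zero, abs_of_nonneg (rhoZ_nonneg _ _ _)] at hi
    obtain ⟨i₁, hi₁⟩ := Filter.eventually_atTop.1 hev
    obtain ⟨i₂, h02, h12⟩ := directed_of (· ≤ ·) i₀ i₁
    exact ⟨i₂, h02, hi₁ i₂ h12⟩

end
end
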